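/- An R[F]-module M over an F_p-algebra R is unit if and only if the base change R_perf ⊗_R M, viewed as a module over R_perf[F], has F acting bijectively, where R_perf = colim_φ R is the direct limit perfection. (For the 'only if' direction assume the Frobenius of R is flat; the perfection map R → R_perf is then faithfully flat over the relevant twist.) -/

import Mathlib

set_option maxHeartbeats 1000000

universe u


open scoped TensorProduct

/-- A copy of `R` viewed as an `R`-algebra via the Frobenius `φ : R → R`, so that
`Rphi p R ⊗[R] M` is the Frobenius base change `φ*M`. -/
def Rphi (_p : ℕ) (R : Type u) : Type u := R

instance Rphi.instCommRing (p : ℕ) (R : Type u) [CommRing R] : CommRing (Rphi p R) :=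
  ‹CommRing R›

noncomputable instance Rphi.instAlgebra (p : ℕ) (R : Type u) [CommRing R] [Fact p.Prime]
    [CharP R p] : Algebra R (Rphi p R) :=
  RingHom.toAlgebra (S := Rphi p R) (frobenius R p)

instance Rphi.instCharP (p : ℕ) (R : Type u) [CommRing R] [CharP R p] : CharP (Rphi p R) p :=
  ‹CharP R p›

/-- `R` viewed as `R`-algebra via the `n`-th iterate of Frobenius. -/
def Rit (_p _n : ℕ) (R : Type u) : Type u := R

instance Rit.instCommRing (p n : ℕ) (R : Type u) [CommRing R] : CommRing (Rit p n R) :=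
  ‹CommRing R›

noncomputable instance Rit.instAlgebra (p n : ℕ) (R : Type u) [CommRing R] [Fact p.Prime]
    [CharP R p] : Algebra R (Rit p n R) :=
  RingHom.toAlgebra (S := Rit p n R) (iterateFrobenius R p n)

noncomputable instance Rit.instAlgebra' (p n : ℕ) (R : Type u) [CommRing R] [Fact p.Prime]
    [CharP R p] : Algebra (Rphi p R) (Rit p (n+1) R) :=
  RingHom.toAlgebra (S := Rit p (n+1) R) (iterateFrobenius R p n : R →+* R)

theorem Rit.flat (p : ℕ) [Fact p.Prime] (R : Type u) [CommRing R] [CharP R p]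
    (hflat : Module.Flat R (Rphi p R)) (n : ℕ) : Module.Flat R (Rit p n R) := by
  induction n with
  | zero =>
    refine Module.Flat.of_linearEquiv (R := R) (M := R) (N := Rit p 0 R) ?_
    exact { toFun := fun x => x
            invFun := fun x => x
            map_add' := fun x y => rfl
            map_smul' := fun r x => by
              rw [Algebra.smul_def,
                show algebraMap R (Rit p 0 R) r = (iterateFrobenius R p 0 r : R) from rfl,
                iterateFrobenius_zero_apply]
              rfl
            left_inv := fun x => rfl
            right_inv := fun x => rfl }
  | succ n ih =>
    haveI : IsScalarTower R (Rphi p R) (Rit p (n+1) R) := IsScalarTower.of_algebraMap_eq' (by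
      show iterateFrobenius R p (n+1) = (iterateFrobenius R p n).comp (frobenius R p)
      rw [← iterateFrobenius_one (R := R) p, ← iterateFrobenius_add])
    haveI : Module.Flat R (Rphi p R) := hflat
    haveI : Module.Flat (Rphi p R) (Rit p (n+1) R) := ih
    exact Module.Flat.trans R (Rphi p R) (Rit p (n+1) R)

section FlatPerf

variable (p : ℕ) [Fact p.Prime] (R : Type u) [CommRing R] [CharP R p]
variable (S : Type v) [CommRing S] [Algebra R S] [CharP S p] [PerfectRing S p]

/-- The `R`-linear map `Rit p n R → S`, `x ↦ (algebraMap R S x) ^ (1/pⁿ)`. -/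
noncomputable def tauLin (n : ℕ) : Rit p n R →ₗ[R] S where
  toFun := fun x => (iterateFrobeniusEquiv S p n).symm (algebraMap R S (show R from x))
  map_add' := fun x y => by
    show (iterateFrobeniusEquiv S p n).symm (algebraMap R S ((show R from x) + (show R from y)))
      = (iterateFrobeniusEquiv S p n).symm (algebraMap R S (show R from x))
        + (iterateFrobeniusEquiv S p n).symm (algebraMap R S (show R from y))
    rw [map_add, map_add]
  map_smul' := fun r x => by
    show (iterateFrobeniusEquiv S p n).symm (algebraMap R S (r ^ p ^ n * (show R from x)))
      = r • (iterateFrobeniusEquiv S p n).symm (algebraMap R S (show R from x))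
    rw [map_mul, map_pow, show (algebraMap R S r) ^ p ^ n
        = iterateFrobeniusEquiv S p n (algebraMap R S r) from rfl,
      map_mul, RingEquiv.symm_apply_apply, Algebra.smul_def]

lemma tauLin_apply (n : ℕ) (x : R) :
    tauLin p R S n (show Rit p n R from x) =
      (iterateFrobeniusEquiv S p n).symm (algebraMap R S x) := rfl

/-- The `R`-linear map `Rit p n R → Rit p (n+k) R`, `x ↦ x ^ pᵏ`. -/
noncomputable def stepLin (n k : ℕ) : Rit p n R →ₗ[R] Rit p (n + k) R where
  toFun := fun x => show Rit p (n + k) R from (show R from x) ^ p ^ k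
  map_add' := fun x y => by
    show ((show R from x) + (show R from y)) ^ p ^ k
      = (show R from x) ^ p ^ k + (show R from y) ^ p ^ k
    exact add_pow_char_pow (show R from x) (show R from y) p k
  map_smul' := fun r x => by
    show (r ^ p ^ n * (show R from x)) ^ p ^ k = r ^ p ^ (n + k) * (show R from x) ^ p ^ k
    rw [mul_pow, ← pow_mul, ← pow_add]

lemma stepLin_apply (n k : ℕ) (x : Rit p n R) :
    stepLin p R n k x = show Rit p (n + k) R from ((show R from x) ^ p ^ k) := rfl

/-- Multiplication map `I ⊗ Rit → Rit`. -/
noncomputable def mulMap (n : ℕ) (I : Ideal R) : I ⊗[R] Rit p n R →ₗ[R] Rit p n R :=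
  (TensorProduct.lid R (Rit p n R)).toLinearMap ∘ₗ (LinearMap.rTensor (Rit p n R) I.subtype)

lemma mulMap_tmul (n : ℕ) (I : Ideal R) (a : I) (y : Rit p n R) :
    mulMap p R n I (a ⊗ₜ[R] y) = (a : R) • y := by
  simp [mulMap]

/-- Multiplication map `I ⊗ S → S`. -/
noncomputable def mulMapS (I : Ideal R) : I ⊗[R] S →ₗ[R] S :=
  (TensorProduct.lid R S).toLinearMap ∘ₗ (LinearMap.rTensor S I.subtype)

lemma mulMapS_tmul (I : Ideal R) (a : I) (y : S) :
    mulMapS R S I (a ⊗ₜ[R] y) = (a : R) • y := by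
  simp [mulMapS]

theorem flat_of_perf (hflat : Module.Flat R (Rphi p R))
    (hexh : ∀ s : S, ∃ n : ℕ, s ^ p ^ n ∈ (algebraMap R S).range)
    (hker : ∀ a : R, algebraMap R S a = 0 ↔ ∃ n : ℕ, a ^ p ^ n = 0) :
    Module.Flat R S := by
  rw [Module.Flat.iff_rTensor_injective']
  intro I
  rw [injective_iff_map_eq_zero]
  intro x hx
  obtain ⟨t, rfl⟩ := TensorProduct.exists_finset x
  have hexh' : ∀ (s : S) (m n : ℕ), m ≤ n → (s ^ p ^ m ∈ (algebraMap R S).range) →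
      s ^ p ^ n ∈ (algebraMap R S).range := by
    rintro s m n hmn ⟨r, hr⟩
    exact ⟨r ^ p ^ (n - m), by rw [map_pow, hr, ← pow_mul, ← pow_add,
      Nat.add_sub_cancel' hmn]⟩
  obtain ⟨n, hn⟩ : ∃ n : ℕ, ∀ e ∈ t, (e : ↥I × S).2 ^ p ^ n ∈ (algebraMap R S).range :=
    ⟨t.sup (fun e => (hexh e.2).choose), fun e he =>
      hexh' _ _ _ (Finset.le_sup (f := fun e => (hexh e.2).choose) he) (hexh e.2).choose_spec⟩
  choose r hr using fun (e : {e // e ∈ t}) => RingHom.mem_range.mp (hn e e.2)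
  set x' : I ⊗[R] Rit p n R :=
    ∑ e ∈ t.attach, (e : ↥I × S).1 ⊗ₜ[R] (show Rit p n R from r e) with hx'def
  have hτ : ∀ (e : {e // e ∈ t}), tauLin p R S n (show Rit p n R from r e) = (e : ↥I × S).2 := by
    intro e
    rw [tauLin_apply, hr e]
    rw [show ((e : ↥I × S).2 ^ p ^ n) = iterateFrobeniusEquiv S p n (e : ↥I × S).2 from rfl,
      RingEquiv.symm_apply_apply]
  have hx'τ : (LinearMap.lTensor I (tauLin p R S n)) x' = ∑ e ∈ t, e.1 ⊗ₜ[R] e.2 := by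
    rw [hx'def, map_sum, ← Finset.sum_attach t (fun e => e.1 ⊗ₜ[R] e.2)]
    exact Finset.sum_congr rfl (fun e _ => by rw [LinearMap.lTensor_tmul, hτ e])
  have hnat1 : ∀ z : I ⊗[R] Rit p n R,
      tauLin p R S n (mulMap p R n I z)
        = mulMapS R S I (LinearMap.lTensor I (tauLin p R S n) z) := by
    intro z
    induction z using TensorProduct.induction_on with
    | zero => simp
    | tmul a y => rw [mulMap_tmul, map_smul, LinearMap.lTensor_tmul, mulMapS_tmul]
    | add z₁ z₂ h₁ h₂ => rw [map_add, map_add, map_add, map_add, h₁, h₂]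
  set c : Rit p n R := mulMap p R n I x' with hcdef
  have hτc : tauLin p R S n c = 0 := by
    rw [hcdef, hnat1, hx'τ]
    show (TensorProduct.lid R S) (LinearMap.rTensor S I.subtype (∑ e ∈ t, e.1 ⊗ₜ[R] e.2)) = 0
    rw [hx, map_zero]
  have hc0 : algebraMap R S (show R from c) = 0 := by
    have h2 : (iterateFrobeniusEquiv S p n).symm (algebraMap R S (show R from c)) = 0 := hτc
    have h3 := congrArg (iterateFrobeniusEquiv S p n) h2
    rwa [RingEquiv.apply_symm_apply, map_zero] at h3
  obtain ⟨k, hk⟩ := (hker (show R from c)).mp hc0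
  set x'' : I ⊗[R] Rit p (n + k) R := LinearMap.lTensor I (stepLin p R n k) x' with hx''def
  have hnat2 : ∀ z : I ⊗[R] Rit p n R,
      mulMap p R (n + k) I (LinearMap.lTensor I (stepLin p R n k) z)
        = stepLin p R n k (mulMap p R n I z) := by
    intro z
    induction z using TensorProduct.induction_on with
    | zero => simp
    | tmul a y => rw [LinearMap.lTensor_tmul, mulMap_tmul, mulMap_tmul, map_smul]
    | add z₁ z₂ h₁ h₂ => rw [map_add, map_add, map_add, map_add, h₁, h₂]
  have hx''0 : x'' = 0 := by
    have h1 : mulMap p R (n + k) I x'' = 0 := by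
      rw [hx''def, hnat2, ← hcdef, stepLin_apply]
      exact hk
    have h2 : LinearMap.rTensor (Rit p (n + k) R) I.subtype x'' = 0 := by
      have h3 := (TensorProduct.lid R (Rit p (n + k) R)).injective
        (a₁ := LinearMap.rTensor (Rit p (n + k) R) I.subtype x'') (a₂ := 0)
      rw [map_zero] at h3
      exact h3 h1
    have hinj := (Module.Flat.iff_rTensor_injective' (R := R) (M := Rit p (n + k) R)).mp
      (Rit.flat p R hflat (n + k)) I
    exact hinj (a₁ := x'') (a₂ := 0) (by rw [h2, map_zero])
  have hcomp : ∀ y : Rit p n R,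
      tauLin p R S (n + k) (stepLin p R n k y) = tauLin p R S n y := by
    intro y
    show (iterateFrobeniusEquiv S p (n + k)).symm (algebraMap R S ((show R from y) ^ p ^ k))
      = (iterateFrobeniusEquiv S p n).symm (algebraMap R S (show R from y))
    rw [map_pow, show (algebraMap R S (show R from y)) ^ p ^ k
        = iterateFrobeniusEquiv S p k (algebraMap R S (show R from y)) from rfl,
      iterateFrobeniusEquiv_symm_add_apply, RingEquiv.symm_apply_apply]
  calc (∑ e ∈ t, e.1 ⊗ₜ[R] e.2) = LinearMap.lTensor I (tauLin p R S n) x' := hx'τ.symm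
    _ = LinearMap.lTensor I (tauLin p R S (n + k)) x'' := by
        rw [hx''def, ← LinearMap.lTensor_comp_apply]
        congr 1
        exact congrArg _ (LinearMap.ext hcomp).symm
    _ = 0 := by rw [hx''0, map_zero]

end FlatPerf

section PurePerf

variable (p : ℕ) [Fact p.Prime] (R : Type u) [CommRing R] [CharP R p]
variable (S : Type v) [CommRing S] [Algebra R S] [CharP S p] [PerfectRing S p]

theorem one_mem_of_perf
    (hexh : ∀ s : S, ∃ n : ℕ, s ^ p ^ n ∈ (algebraMap R S).range)
    (hker : ∀ a : R, algebraMap R S a = 0 ↔ ∃ n : ℕ, a ^ p ^ n = 0)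
    (I : Ideal R) (h1 : (1 : S) ∈ I.map (algebraMap R S)) : (1 : R) ∈ I := by
  have h1' : (1 : S) ∈ Submodule.span S ((algebraMap R S) '' (I : Set R)) := h1
  obtain ⟨k, cf, g, hsum⟩ := Submodule.mem_span_set'.mp h1'
  choose a haI hag using fun i : Fin k => (g i).2
  have hexh' : ∀ (s : S) (m n : ℕ), m ≤ n → (s ^ p ^ m ∈ (algebraMap R S).range) →
      s ^ p ^ n ∈ (algebraMap R S).range := by
    rintro s m n hmn ⟨r, hr⟩
    exact ⟨r ^ p ^ (n - m), by rw [map_pow, hr, ← pow_mul, ← pow_add,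
      Nat.add_sub_cancel' hmn]⟩
  obtain ⟨m, hm⟩ : ∃ m : ℕ, ∀ i : Fin k, (cf i) ^ p ^ m ∈ (algebraMap R S).range :=
    ⟨Finset.univ.sup (fun i => (hexh (cf i)).choose), fun i =>
      hexh' _ _ _ (Finset.le_sup (f := fun i => (hexh (cf i)).choose) (Finset.mem_univ i))
        (hexh (cf i)).choose_spec⟩
  choose rr hrr using fun i => RingHom.mem_range.mp (hm i)
  set c : R := ∑ i, rr i * (a i) ^ p ^ m with hcdef
  have hc1 : algebraMap R S c = 1 := by
    rw [hcdef, map_sum]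
    have : ∀ i : Fin k, algebraMap R S (rr i * (a i) ^ p ^ m)
        = (cf i • (g i : S)) ^ p ^ m := by
      intro i
      rw [map_mul, map_pow, hrr i, hag i, smul_eq_mul, mul_pow]
    rw [Finset.sum_congr rfl (fun i _ => this i), ← sum_pow_char_pow, hsum, one_pow]
  have hcI : c ∈ I := by
    refine Submodule.sum_mem _ (fun i _ => I.mul_mem_left _ ?_)
    exact Ideal.pow_mem_of_mem I (haI i) _ (pow_pos (Fact.out : p.Prime).pos m)
  have h0 : algebraMap R S (1 - c) = 0 := by rw [map_sub, map_one, hc1, sub_self]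
  obtain ⟨k2, hk2⟩ := (hker _).mp h0
  have h5 : (1 : R) = -((-c) ^ p ^ k2) := by
    rw [sub_eq_add_neg, add_pow_char_pow, one_pow] at hk2
    exact (neg_eq_of_add_eq_zero_left hk2).symm
  rw [h5]
  exact Submodule.neg_mem _ (Ideal.pow_mem_of_mem I (Submodule.neg_mem _ hcI) _
    (pow_pos (Fact.out : p.Prime).pos k2))

theorem pure_of_perf (hflat : Module.Flat R (Rphi p R))
    (hexh : ∀ s : S, ∃ n : ℕ, s ^ p ^ n ∈ (algebraMap R S).range)
    (hker : ∀ a : R, algebraMap R S a = 0 ↔ ∃ n : ℕ, a ^ p ^ n = 0)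
    (N : Type w) [AddCommGroup N] [Module R N] (x : N)
    (hx : (1 : S) ⊗ₜ[R] x = 0) : x = 0 := by
  haveI hFlatS : Module.Flat R S := flat_of_perf p R S hflat hexh hker
  set L : R →ₗ[R] N := LinearMap.toSpanSingleton R N x with hLdef
  set I : Ideal R := LinearMap.ker L with hIdef
  set L' : (R ⧸ I) →ₗ[R] N := Submodule.liftQ I L (le_refl _) with hL'def
  have hL'inj : Function.Injective L' := by
    rw [← LinearMap.ker_eq_bot]
    exact Submodule.ker_liftQ_eq_bot I L _ (le_refl _)
  have hinj := Module.Flat.lTensor_preserves_injective_linearMap (M := S) L' hL'inj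
  have h1 : LinearMap.lTensor S L' ((1 : S) ⊗ₜ[R] (Submodule.Quotient.mk (1 : R))) = 0 := by
    rw [LinearMap.lTensor_tmul]
    have hL1 : L' (Submodule.Quotient.mk (1 : R)) = x := by
      rw [hL'def, Submodule.liftQ_apply, hLdef, LinearMap.toSpanSingleton_apply, one_smul]
    rw [hL1, hx]
  have h2 : (1 : S) ⊗ₜ[R] (Submodule.Quotient.mk (1 : R) : R ⧸ I) = 0 := by
    apply hinj
    rw [h1, map_zero]
  set J : Ideal S := I.map (algebraMap R S) with hJdef
  have hgker : I ≤ LinearMap.ker (Algebra.linearMap R (S ⧸ J)) := by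
    intro b hbI
    have : algebraMap R (S ⧸ J) b = Ideal.Quotient.mk J (algebraMap R S b) := by
      rw [← Ideal.Quotient.algebraMap_eq, ← IsScalarTower.algebraMap_apply]
    rw [LinearMap.mem_ker, Algebra.linearMap_apply, this, Ideal.Quotient.eq_zero_iff_mem]
    exact Ideal.mem_map_of_mem _ hbI
  set g : (R ⧸ I) →ₗ[R] (S ⧸ J) := Submodule.liftQ I (Algebra.linearMap R (S ⧸ J)) hgker
    with hgdef
  set bil : S →ₗ[R] (R ⧸ I) →ₗ[R] (S ⧸ J) := LinearMap.mk₂ R (fun s y => s • g y)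
    (fun s₁ s₂ y => add_smul s₁ s₂ (g y))
    (fun r s y => smul_assoc r s (g y))
    (fun s y₁ y₂ => by
      show s • g (y₁ + y₂) = s • g y₁ + s • g y₂
      rw [map_add, smul_add])
    (fun r s y => by
      show s • g (r • y) = r • (s • g y)
      rw [map_smul, ← algebraMap_smul S r (g y), smul_smul, ← algebraMap_smul S r (s • g y),
        smul_smul, mul_comm]) with hbildef
  set ν : S ⊗[R] (R ⧸ I) →ₗ[R] (S ⧸ J) := TensorProduct.lift bil with hνdef
  have hν2 := congrArg ν h2
  rw [map_zero, hνdef, TensorProduct.lift.tmul] at hν2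
  have h1J : (1 : S) ∈ J := by
    rw [← Ideal.Quotient.eq_zero_iff_mem]
    have hb : bil 1 (Submodule.Quotient.mk (1 : R)) = Ideal.Quotient.mk J (1 : S) := by
      show (1 : S) • g (Submodule.Quotient.mk (1 : R)) = _
      rw [one_smul, hgdef, Submodule.liftQ_apply, Algebra.linearMap_apply, map_one, map_one]
    rw [← hb, hν2]
  have h1I : (1 : R) ∈ I := one_mem_of_perf p R S hexh hker I h1J
  have := h1I
  rw [hIdef, LinearMap.mem_ker, hLdef, LinearMap.toSpanSingleton_apply, one_smul] at this
  exact this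

end PurePerf

/-- A unit `R[F]`-module structure: the linearization `φ*M → M`, `a ⊗ m ↦ a • F m`, is an
isomorphism. -/
def UnitFModule (p : ℕ) (R : Type u) (M : Type v) [Fact p.Prime] [CommRing R] [CharP R p]
    [AddCommGroup M] [Module R M] (F : M → M) : Prop :=
  ∃ Fs : (Rphi p R) ⊗[R] M →+ M,
    (∀ (a : R) (m : M), Fs ((show Rphi p R from a) ⊗ₜ[R] m) = a • F m) ∧
    Function.Bijective Fs

/-- Let `R` be an `F_p`-algebra with flat Frobenius, and `S = R_perf` the
direct limit perfection of `R` (characterized abstractly: `S` is a perfect `R`-algebra such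
that a `p`-power of every element of `S` lies in the image of `R`, and an element of `R`
maps to `0` in `S` iff a `p`-power of it vanishes).  Then an `R[F]`-module `(M, F)` is unit
if and only if `F` acts bijectively on the base change `S ⊗_R M` (where the induced
semilinear operator `F'` is determined by `F' (s ⊗ m) = s^p ⊗ F m`). -/
theorem stmt15 (p : ℕ) [Fact p.Prime] (R : Type u) [CommRing R] [CharP R p]
    [Module.Flat R (Rphi p R)]
    (S : Type u) [CommRing S] [Algebra R S] [CharP S p] [PerfectRing S p]
    (hexh : ∀ s : S, ∃ n : ℕ, s ^ p ^ n ∈ (algebraMap R S).range)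
    (hker : ∀ a : R, algebraMap R S a = 0 ↔ ∃ n : ℕ, a ^ p ^ n = 0)
    (M : Type u) [AddCommGroup M] [Module R M] (F : M → M)
    (hFadd : ∀ x y, F (x + y) = F x + F y)
    (hFsemi : ∀ (r : R) (m : M), F (r • m) = r ^ p • F m)
    (F' : S ⊗[R] M → S ⊗[R] M)
    (hF'add : ∀ x y, F' (x + y) = F' x + F' y)
    (hF' : ∀ (s : S) (m : M), F' (s ⊗ₜ[R] m) = (s ^ p) ⊗ₜ[R] F m) :
    UnitFModule p R M F ↔ Function.Bijective F' := by
  classical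
  have hF'0 : F' 0 = 0 := by
    have h := hF'add 0 0
    rw [add_zero, left_eq_add] at h
    exact h
  set ρ : R →+* S := ((frobeniusEquiv S p).symm.toRingHom).comp (algebraMap R S) with hρdef
  have hρ_apply : ∀ r : R, ρ r = (frobeniusEquiv S p).symm (algebraMap R S r) := fun r => rfl
  have hρp : ∀ r : R, (ρ r) ^ p = algebraMap R S r := by
    intro r
    rw [hρ_apply, show ((frobeniusEquiv S p).symm (algebraMap R S r)) ^ p
      = frobenius S p ((frobeniusEquiv S p).symm (algebraMap R S r)) from rfl,
      frobenius_apply_frobeniusEquiv_symm]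
  have hρfrob : ∀ r : R, ρ (r ^ p) = algebraMap R S r := by
    intro r
    rw [map_pow, hρp]
  -- the Frobenius base-change map `w : φ*M → S ⊗ M`, `a ⊗ m ↦ ρ a ⊗ m`
  set w : (Rphi p R) ⊗[R] M →+ S ⊗[R] M := TensorProduct.liftAddHom
    (AddMonoidHom.mk'
      (fun a => AddMonoidHom.mk' (fun m => ρ (show R from a) ⊗ₜ[R] m)
        (fun m₁ m₂ => TensorProduct.tmul_add _ m₁ m₂))
      (fun a b => by
        ext m
        show ρ ((show R from a) + (show R from b)) ⊗ₜ[R] m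
          = ρ (show R from a) ⊗ₜ[R] m + ρ (show R from b) ⊗ₜ[R] m
        rw [map_add, TensorProduct.add_tmul]))
    (fun r a m => by
      show ρ (r ^ p * (show R from a)) ⊗ₜ[R] m = ρ (show R from a) ⊗ₜ[R] (r • m)
      rw [map_mul, hρfrob, ← Algebra.smul_def, TensorProduct.smul_tmul]) with hwdef
  have hw : ∀ (a : R) (m : M), w ((show Rphi p R from a) ⊗ₜ[R] m) = ρ a ⊗ₜ[R] m :=
    fun a m => TensorProduct.liftAddHom_tmul _ _ _ _
  -- `w` intertwines the `Rphi`-scalar action with multiplication by `ρ`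
  have hsmul_tensor : ∀ (r : R) (x : (Rphi p R) ⊗[R] M),
      w ((show Rphi p R from r) • x) = ρ r • w x := by
    intro r x
    induction x using TensorProduct.induction_on with
    | zero => rw [smul_zero, map_zero, smul_zero]
    | tmul a m =>
      rw [TensorProduct.smul_tmul']
      have h1 : ((show Rphi p R from r) • a) = (show Rphi p R from r * (show R from a)) := rfl
      erw [h1, show (show Rphi p R from r * (show R from a)) ⊗ₜ[R] m
        = (show Rphi p R from (r * (show R from a))) ⊗ₜ[R] m from rfl, hw,
        show (a ⊗ₜ[R] m : (Rphi p R) ⊗[R] M)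
          = (show Rphi p R from (show R from a)) ⊗ₜ[R] m from rfl, hw,
        map_mul, TensorProduct.smul_tmul', smul_eq_mul]
    | add x y hx hy => rw [smul_add, map_add, map_add, hx, hy, smul_add]
  -- `F' ∘ w = (1 ⊗ ·) ∘ Fs` for any linearization `Fs` of `F`
  have hk4 : ∀ (Fs : (Rphi p R) ⊗[R] M →+ M),
      (∀ (a : R) (m : M), Fs ((show Rphi p R from a) ⊗ₜ[R] m) = a • F m) →
      ∀ x, F' (w x) = (1 : S) ⊗ₜ[R] Fs x := by
    intro Fs hFs x
    induction x using TensorProduct.induction_on with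
    | zero => rw [map_zero, map_zero, hF'0, TensorProduct.tmul_zero]
    | tmul a m =>
      erw [show (a ⊗ₜ[R] m : (Rphi p R) ⊗[R] M)
        = (show Rphi p R from (show R from a)) ⊗ₜ[R] m from rfl, hw, hFs, hF', hρp,
        Algebra.algebraMap_eq_smul_one, TensorProduct.smul_tmul]
    | add x y hx hy =>
      rw [map_add, hF'add, map_add, hx, hy, TensorProduct.tmul_add]
  -- compatibility of `F'` with `S`-scalars
  have hF'smul : ∀ (s : S) (x : S ⊗[R] M), F' (s • x) = (s ^ p) • F' x := by
    intro s x
    induction x using TensorProduct.induction_on with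
    | zero => rw [smul_zero, hF'0, smul_zero]
    | tmul u m => rw [TensorProduct.smul_tmul', smul_eq_mul, hF', hF', TensorProduct.smul_tmul', smul_eq_mul, mul_pow]
    | add x y hx hy => rw [smul_add, hF'add, hF'add, hx, hy, smul_add]
  -- any linearization is `Rphi`-linear
  have hk1 : ∀ (Fs : (Rphi p R) ⊗[R] M →+ M),
      (∀ (a : R) (m : M), Fs ((show Rphi p R from a) ⊗ₜ[R] m) = a • F m) →
      ∀ (r : R) (x : (Rphi p R) ⊗[R] M), Fs ((show Rphi p R from r) • x) = r • Fs x := by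
    intro Fs hFs r x
    induction x using TensorProduct.induction_on with
    | zero => rw [smul_zero, map_zero, smul_zero]
    | tmul a m =>
      erw [TensorProduct.smul_tmul', show ((show Rphi p R from r) • a)
          = (show Rphi p R from r * (show R from a)) from rfl,
        show (show Rphi p R from r * (show R from a)) ⊗ₜ[R] m
          = (show Rphi p R from (r * (show R from a))) ⊗ₜ[R] m from rfl, hFs,
        show (a ⊗ₜ[R] m : (Rphi p R) ⊗[R] M)
          = (show Rphi p R from (show R from a)) ⊗ₜ[R] m from rfl, hFs, mul_smul]
    | add x y hx hy => rw [smul_add, map_add, map_add, hx, hy, smul_add]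
  constructor
  · -- unit ⇒ F' bijective
    rintro ⟨Fs, hFs, hFsBij⟩
    set e := Equiv.ofBijective ⇑Fs hFsBij with hedef
    set g : M → (Rphi p R) ⊗[R] M := fun m => e.symm m with hgdef
    have hgF : ∀ m, Fs (g m) = m := fun m => e.apply_symm_apply m
    have hgFs : ∀ x, g (Fs x) = x := fun x => e.symm_apply_apply x
    have hgadd : ∀ m₁ m₂, g (m₁ + m₂) = g m₁ + g m₂ := fun m₁ m₂ =>
      hFsBij.1 (by rw [map_add, hgF, hgF, hgF])
    have hgsmul : ∀ (r : R) (m : M), g (r • m) = (show Rphi p R from r) • g m := fun r m =>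
      hFsBij.1 (by rw [hgF, hk1 Fs hFs, hgF])
    set V : S ⊗[R] M →+ S ⊗[R] M := TensorProduct.liftAddHom
      (AddMonoidHom.mk'
        (fun s => AddMonoidHom.mk' (fun m => (frobeniusEquiv S p).symm s • w (g m))
          (fun m₁ m₂ => by
            show (frobeniusEquiv S p).symm s • w (g (m₁ + m₂))
              = (frobeniusEquiv S p).symm s • w (g m₁) + (frobeniusEquiv S p).symm s • w (g m₂)
            rw [hgadd, map_add, smul_add]))
        (fun s₁ s₂ => by
          ext m
          show (frobeniusEquiv S p).symm (s₁ + s₂) • w (g m) = _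
          rw [map_add, add_smul]
          rfl))
      (fun r s m => by
        show (frobeniusEquiv S p).symm (r • s) • w (g m)
          = (frobeniusEquiv S p).symm s • w (g (r • m))
        rw [hgsmul, hsmul_tensor, Algebra.smul_def, map_mul, smul_smul, hρ_apply, mul_comm]) with hVdef
    have hV : ∀ (s : S) (m : M), V (s ⊗ₜ[R] m) = (frobeniusEquiv S p).symm s • w (g m) :=
      fun s m => TensorProduct.liftAddHom_tmul _ _ _ _
    have hF'V : ∀ y, F' (V y) = y := by
      intro y
      induction y using TensorProduct.induction_on with
      | zero => rw [map_zero, hF'0]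
      | tmul s m =>
        rw [hV, hF'smul, hk4 Fs hFs, hgF,
          show ((frobeniusEquiv S p).symm s) ^ p
            = frobenius S p ((frobeniusEquiv S p).symm s) from rfl,
          frobenius_apply_frobeniusEquiv_symm, TensorProduct.smul_tmul', smul_eq_mul, mul_one]
      | add y₁ y₂ h₁ h₂ => rw [map_add, hF'add, h₁, h₂]
    have hVF' : ∀ y, V (F' y) = y := by
      intro y
      induction y using TensorProduct.induction_on with
      | zero => rw [hF'0, map_zero]
      | tmul s m =>
        have hgFm : g (F m) = (show Rphi p R from 1) ⊗ₜ[R] m := by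
          apply hFsBij.1
          erw [hgF, hFs, one_smul]
        erw [hF', hV, hgFm, hw, map_one,
          show (s ^ p : S) = frobenius S p s from rfl, frobeniusEquiv_symm_apply_frobenius,
          TensorProduct.smul_tmul', smul_eq_mul, mul_one]
      | add y₁ y₂ h₁ h₂ => rw [hF'add, map_add, h₁, h₂]
    exact ⟨fun y₁ y₂ h => by rw [← hVF' y₁, h, hVF' y₂], fun y => ⟨V y, hF'V y⟩⟩
  · -- F' bijective ⇒ unit
    intro hF'bij
    set Fs : (Rphi p R) ⊗[R] M →+ M := TensorProduct.liftAddHom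
      (AddMonoidHom.mk'
        (fun a => AddMonoidHom.mk' (fun m => (show R from a) • F m)
          (fun m₁ m₂ => by
            show (show R from a) • F (m₁ + m₂) = (show R from a) • F m₁ + (show R from a) • F m₂
            rw [hFadd, smul_add]))
        (fun a b => by
          ext m
          show ((show R from a) + (show R from b)) • F m = _
          rw [add_smul]
          rfl))
      (fun r a m => by
        show (r ^ p * (show R from a)) • F m = (show R from a) • F (r • m)
        rw [hFsemi, smul_smul, mul_comm]) with hFsdef
    have hFs : ∀ (a : R) (m : M), Fs ((show Rphi p R from a) ⊗ₜ[R] m) = a • F m :=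
      fun a m => TensorProduct.liftAddHom_tmul _ _ _ _
    -- injectivity of Fs
    have hinj : Function.Injective ⇑Fs := by
      rw [injective_iff_map_eq_zero]
      intro x hx0
      have hwx0 : w x = 0 := by
        apply hF'bij.1
        rw [hk4 Fs hFs x, hx0, TensorProduct.tmul_zero, hF'0]
      letI algR'S : Algebra (Rphi p R) S :=
        RingHom.toAlgebra (show (Rphi p R) →+* S from ρ)
      have halgR'S : ∀ a : Rphi p R, algebraMap (Rphi p R) S a = ρ (show R from a) :=
        fun a => rfl
      -- κ : S ⊗[R'] (R' ⊗[R] M) → S ⊗[R] M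
      set κ : S ⊗[Rphi p R] ((Rphi p R) ⊗[R] M) →+ S ⊗[R] M := TensorProduct.liftAddHom
        (AddMonoidHom.mk'
          (fun s => AddMonoidHom.mk' (fun y => s • w y)
            (fun y₁ y₂ => by
              show s • w (y₁ + y₂) = s • w y₁ + s • w y₂
              rw [map_add, smul_add]))
          (fun s₁ s₂ => by
            ext y
            show (s₁ + s₂) • w y = _
            rw [add_smul]
            rfl))
        (fun c s y => by
          show (c • s) • w y = s • w (c • y)
          erw [show (c • s) = ρ (show R from c) * s from rfl,
            show (c • y) = (show Rphi p R from (show R from c)) • y from rfl,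
            hsmul_tensor, smul_smul, mul_comm]) with hκdef
      have hκ : ∀ (s : S) (y : (Rphi p R) ⊗[R] M), κ (s ⊗ₜ[Rphi p R] y) = s • w y :=
        fun s y => TensorProduct.liftAddHom_tmul _ _ _ _
      -- κ' : S ⊗[R] M → S ⊗[R'] (R' ⊗[R] M)
      have e1 : ∀ (r : R) (m : M),
          ((show Rphi p R from 1) ⊗ₜ[R] (r • m) : (Rphi p R) ⊗[R] M)
            = (show Rphi p R from r ^ p) • ((show Rphi p R from 1) ⊗ₜ[R] m) := by
        intro r m
        rw [← TensorProduct.smul_tmul, TensorProduct.smul_tmul']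
        exact rfl
      set κ' : S ⊗[R] M →+ S ⊗[Rphi p R] ((Rphi p R) ⊗[R] M) := TensorProduct.liftAddHom
        (AddMonoidHom.mk'
          (fun s => AddMonoidHom.mk'
            (fun m => s ⊗ₜ[Rphi p R] ((show Rphi p R from 1) ⊗ₜ[R] m))
            (fun m₁ m₂ => by
              show s ⊗ₜ[Rphi p R] ((show Rphi p R from 1) ⊗ₜ[R] (m₁ + m₂))
                = s ⊗ₜ[Rphi p R] ((show Rphi p R from 1) ⊗ₜ[R] m₁)
                  + s ⊗ₜ[Rphi p R] ((show Rphi p R from 1) ⊗ₜ[R] m₂)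
              rw [TensorProduct.tmul_add, TensorProduct.tmul_add]))
          (fun s₁ s₂ => by
            ext m
            show (s₁ + s₂) ⊗ₜ[Rphi p R] ((show Rphi p R from 1) ⊗ₜ[R] m) = _
            rw [TensorProduct.add_tmul]
            rfl))
        (fun r s m => by
          show (r • s) ⊗ₜ[Rphi p R] ((show Rphi p R from 1) ⊗ₜ[R] m)
            = s ⊗ₜ[Rphi p R] ((show Rphi p R from 1) ⊗ₜ[R] (r • m))
          have e2 : ((show Rphi p R from r ^ p) • s) = r • s := by
            show ρ (r ^ p) * s = r • s
            rw [hρfrob, ← Algebra.smul_def]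
          rw [e1, ← TensorProduct.smul_tmul, e2]) with hκ'def
      have hκ' : ∀ (s : S) (m : M),
          κ' (s ⊗ₜ[R] m) = s ⊗ₜ[Rphi p R] ((show Rphi p R from 1) ⊗ₜ[R] m) :=
        fun s m => TensorProduct.liftAddHom_tmul _ _ _ _
      have hκ'κ : ∀ z, κ' (κ z) = z := by
        intro z
        induction z using TensorProduct.induction_on with
        | zero => rw [map_zero, map_zero]
        | tmul s y =>
          rw [hκ]
          induction y using TensorProduct.induction_on with
          | zero => rw [map_zero, smul_zero, map_zero, TensorProduct.tmul_zero]
          | tmul a m =>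
            erw [show (a ⊗ₜ[R] m : (Rphi p R) ⊗[R] M)
                = (show Rphi p R from (show R from a)) ⊗ₜ[R] m from rfl, hw,
              TensorProduct.smul_tmul', smul_eq_mul, hκ']
            have e3 : (s * ρ (show R from a))
                = (show Rphi p R from (show R from a)) • s := by
              show _ = ρ (show R from a) * s
              rw [mul_comm]
            rw [e3, TensorProduct.smul_tmul, TensorProduct.smul_tmul', smul_eq_mul, mul_one]
          | add y₁ y₂ h₁ h₂ =>
            rw [map_add, smul_add, map_add, h₁, h₂, ← TensorProduct.tmul_add]
        | add z₁ z₂ h₁ h₂ => rw [map_add, map_add, h₁, h₂]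
      have hz : (1 : S) ⊗ₜ[Rphi p R] x = 0 := by
        have hc : κ ((1 : S) ⊗ₜ[Rphi p R] x) = 0 := by rw [hκ, one_smul, hwx0]
        have hc2 := congrArg ⇑κ' hc
        rwa [hκ'κ, map_zero] at hc2
      have hexh2 : ∀ s : S, ∃ n : ℕ, s ^ p ^ n ∈ (algebraMap (Rphi p R) S).range := by
        intro s
        obtain ⟨n, hn⟩ := hexh (s ^ p)
        obtain ⟨r0, hr0⟩ := RingHom.mem_range.mp hn
        refine ⟨n, RingHom.mem_range.mpr ⟨show Rphi p R from r0, ?_⟩⟩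
        rw [halgR'S, hρ_apply, hr0,
          show ((s ^ p) ^ p ^ n) = frobenius S p (s ^ p ^ n) from by
            rw [frobenius_def, ← pow_mul, ← pow_mul, mul_comm],
          frobeniusEquiv_symm_apply_frobenius]
      have hker2 : ∀ a : Rphi p R,
          algebraMap (Rphi p R) S a = 0 ↔ ∃ n : ℕ, a ^ p ^ n = 0 := by
        intro a
        rw [halgR'S, hρ_apply]
        constructor
        · intro h
          have h2 := congrArg (frobeniusEquiv S p) h
          rw [RingEquiv.apply_symm_apply, map_zero] at h2
          obtain ⟨n, hn⟩ := (hker (show R from a)).mp h2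
          exact ⟨n, hn⟩
        · rintro ⟨n, hn⟩
          rw [(hker (show R from a)).mpr ⟨n, hn⟩, map_zero]
      exact pure_of_perf p (Rphi p R) S
        (show Module.Flat (Rphi p R) (Rphi p (Rphi p R)) from
          inferInstanceAs (Module.Flat R (Rphi p R)))
        hexh2 hker2 ((Rphi p R) ⊗[R] M) x hz
    -- surjectivity of Fs
    have hsurj : Function.Surjective ⇑Fs := by
      intro m
      set M₀ : Submodule R M := Submodule.span R (Set.range F) with hM₀
      have hQ : ∀ y : S ⊗[R] M, LinearMap.lTensor S M₀.mkQ (F' y) = 0 := by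
        intro y
        induction y using TensorProduct.induction_on with
        | zero => rw [hF'0, map_zero]
        | tmul s m' =>
          rw [hF', LinearMap.lTensor_tmul]
          have h1 : M₀.mkQ (F m') = 0 := by
            rw [Submodule.mkQ_apply, Submodule.Quotient.mk_eq_zero]
            exact Submodule.subset_span ⟨m', rfl⟩
          rw [h1, TensorProduct.tmul_zero]
        | add y₁ y₂ h₁ h₂ => rw [hF'add, map_add, h₁, h₂, add_zero]
      obtain ⟨y, hy⟩ := hF'bij.2 ((1 : S) ⊗ₜ[R] m)
      have h0 : (1 : S) ⊗ₜ[R] (M₀.mkQ m) = 0 := by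
        have h2 := hQ y
        rw [hy, LinearMap.lTensor_tmul] at h2
        exact h2
      have hm0 : M₀.mkQ m = 0 :=
        pure_of_perf p R S inferInstance hexh hker (M ⧸ M₀) _ h0
      have hmM₀ : m ∈ M₀ := by
        rw [Submodule.mkQ_apply, Submodule.Quotient.mk_eq_zero] at hm0
        exact hm0
      refine Submodule.span_induction (p := fun x _ => x ∈ Set.range ⇑Fs) ?_ ?_ ?_ ?_ hmM₀
      · rintro _ ⟨m', rfl⟩
        exact ⟨(show Rphi p R from 1) ⊗ₜ[R] m', by erw [hFs, one_smul]⟩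
      · exact ⟨0, map_zero Fs⟩
      · rintro x y _ _ ⟨u, rfl⟩ ⟨v, rfl⟩
        exact ⟨u + v, map_add Fs u v⟩
      · rintro r x _ ⟨u, rfl⟩
        exact ⟨(show Rphi p R from r) • u, hk1 Fs hFs r u⟩
    exact ⟨Fs, hFs, hinj, hsurj⟩
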